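/- Let G be a topological group. If for every neighborhood U of the identity there exists a compact subset K ⊆ G with G = K·U·K, then G is precompact. -/

import Mathlib

open Filter Topology

/-- B.H. Neumann style covering lemma: if `G` is covered by finitely many sets
`W * {c}` where the `W`'s range over a finite family `𝒲` of subsets containing `1`,
then for some `W ∈ 𝒲` there is a finite set `E` with `G = W⁻¹ * W * E`. -/
theorem coreNeumann {G : Type*} [Group G] :
    ∀ (n : ℕ) (𝒲 : Finset (Set G)) (C : Set G → Finset G),
    𝒲.card ≤ n → (∀ W ∈ 𝒲, (1:G) ∈ W) →
    (∀ x : G, ∃ W ∈ 𝒲, ∃ c ∈ C W, ∃ w ∈ W, x = w * c) →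
    ∃ W ∈ 𝒲, ∃ E : Finset G, ∀ x : G, ∃ c ∈ E, ∃ w₁ ∈ W, ∃ w₂ ∈ W,
      x = w₁⁻¹ * (w₂ * c) := by
  classical
  intro n
  induction n with
  | zero =>
    intro 𝒲 C hcard h1 hcov
    obtain ⟨W, hW, _⟩ := hcov 1
    rw [Nat.le_zero, Finset.card_eq_zero] at hcard
    simp [hcard] at hW
  | succ n ih =>
    intro 𝒲 C hcard h1 hcov
    obtain ⟨W₀, hW₀, -⟩ := hcov 1
    by_cases hA : ∀ x : G, ∃ c ∈ C W₀, ∃ w₁ ∈ W₀, ∃ w₂ ∈ W₀, x = w₁⁻¹ * (w₂ * c)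
    · exact ⟨W₀, hW₀, C W₀, hA⟩
    · push_neg at hA
      obtain ⟨g, hg⟩ := hA
      have hcov' : ∀ x : G, ∃ W ∈ 𝒲.erase W₀,
          ∃ c ∈ (C W ∪ ((C W) ×ˢ (C W₀)).image (fun p => p.1 * g⁻¹ * p.2)),
          ∃ w ∈ W, x = w * c := by
        intro x
        obtain ⟨W, hW, c, hc, w, hw, hx⟩ := hcov x
        by_cases hWW : W = W₀
        · subst hWW
          obtain ⟨W₁, hW₁, c₁, hc₁, w₁, hw₁, hy⟩ := hcov (w * g)
          have hne : W₁ ≠ W := by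
            rintro rfl
            refine hg c₁ hc₁ w hw w₁ hw₁ ?_
            rw [eq_inv_mul_iff_mul_eq]; exact hy
          refine ⟨W₁, Finset.mem_erase.mpr ⟨hne, hW₁⟩, c₁ * g⁻¹ * c, ?_, w₁, hw₁, ?_⟩
          · refine Finset.mem_union_right _ (Finset.mem_image.mpr ⟨(c₁, c), ?_, rfl⟩)
            exact Finset.mem_product.mpr ⟨hc₁, hc⟩
          · have hw' : w = w₁ * c₁ * g⁻¹ := by
              rw [← hy]; group
            rw [hx, hw']; group
        · exact ⟨W, Finset.mem_erase.mpr ⟨hWW, hW⟩, c, Finset.mem_union_left _ hc, w, hw, hx⟩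
      have hcard' : (𝒲.erase W₀).card ≤ n := by
        have h1c : 0 < 𝒲.card := Finset.card_pos.mpr ⟨W₀, hW₀⟩
        have := Finset.card_erase_of_mem hW₀
        omega
      obtain ⟨W, hW, E, hE⟩ := ih (𝒲.erase W₀)
        (fun W => C W ∪ ((C W) ×ˢ (C W₀)).image (fun p : G × G => p.1 * g⁻¹ * p.2)) hcard'
        (fun W hW => h1 W (Finset.mem_of_mem_erase hW)) hcov'
      exact ⟨W, Finset.mem_of_mem_erase hW, E, hE⟩

/-- The conjugate by `a` of the triple product set `V * V * V`. -/
def conjClass {G : Type*} [Group G] (V : Set G) (a : G) : Set G :=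
  {y | ∃ p ∈ V, ∃ q ∈ V, ∃ r ∈ V, y = a * (p * q * r) * a⁻¹}

/-- If for every identity neighborhood `U` there is a compact `K ⊆ G` with
`G = K·U·K`, then `G` is precompact. -/
theorem stmt4 {G : Type*} [Group G] [TopologicalSpace G] [IsTopologicalGroup G]
    (h : ∀ U ∈ 𝓝 (1 : G), ∃ K : Set G, IsCompact K ∧ ∀ g : G,
      ∃ k₁ ∈ K, ∃ u ∈ U, ∃ k₂ ∈ K, g = k₁ * u * k₂) :
    ∀ U ∈ 𝓝 (1 : G), ∃ F : Finset G, ∀ g : G, ∃ u ∈ U, ∃ f ∈ F, g = u * f := by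
  classical
  intro U hU
  -- build a small symmetric neighborhood V with a 6-fold product property
  obtain ⟨V₁, hV₁, hV₁U⟩ := exists_nhds_one_split hU
  obtain ⟨V₂, hV₂, hV₂U⟩ := exists_nhds_one_split hV₁
  obtain ⟨V₃, hV₃, hV₃U⟩ := exists_nhds_one_split hV₂
  have hV : V₃ ∩ V₃⁻¹ ∈ 𝓝 (1 : G) :=
    Filter.inter_mem hV₃ (inv_mem_nhds_one (G := G) hV₃)
  set V : Set G := V₃ ∩ V₃⁻¹ with hVdef
  have hVsymm : ∀ a ∈ V, a⁻¹ ∈ V := by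
    rintro a ⟨ha₁, ha₂⟩
    exact ⟨ha₂, by simpa using ha₁⟩
  have h1V : (1 : G) ∈ V := mem_of_mem_nhds hV
  have hP6 : ∀ a₁ ∈ V, ∀ a₂ ∈ V, ∀ a₃ ∈ V, ∀ a₄ ∈ V, ∀ a₅ ∈ V, ∀ a₆ ∈ V,
      a₁ * a₂ * a₃ * a₄ * a₅ * a₆ ∈ U := by
    intro a₁ h1 a₂ h2 a₃ h3 a₄ h4 a₅ h5 a₆ h6
    have e12 : a₁ * a₂ ∈ V₂ := hV₃U a₁ h1.1 a₂ h2.1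
    have e34 : a₃ * a₄ ∈ V₂ := hV₃U a₃ h3.1 a₄ h4.1
    have e56 : a₅ * a₆ ∈ V₂ := hV₃U a₅ h5.1 a₆ h6.1
    have e1 : a₁ * a₂ * (a₃ * a₄) ∈ V₁ := hV₂U _ e12 _ e34
    have e2 : a₅ * a₆ ∈ V₁ := by
      have := hV₂U _ e56 1 (mem_of_mem_nhds hV₂)
      simpa using this
    have := hV₁U _ e1 _ e2
    convert this using 1
    group
  obtain ⟨K, hK, hKcov⟩ := h V hV
  -- finite covers of K by left/right translates of V
  obtain ⟨A, hA, hAcov⟩ := hK.elim_nhds_subcover (fun a => {y | a⁻¹ * y ∈ V})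
    (fun x _ => by
      have hc : ContinuousAt (fun y => x⁻¹ * y) x :=
        (continuous_const.mul continuous_id).continuousAt
      have := hc.preimage_mem_nhds (by simpa using hV)
      exact this)
  obtain ⟨B, hB, hBcov⟩ := hK.elim_nhds_subcover (fun b => {y | y * b⁻¹ ∈ V})
    (fun x _ => by
      have hc : ContinuousAt (fun y => y * x⁻¹) x :=
        (continuous_id.mul continuous_const).continuousAt
      have := hc.preimage_mem_nhds (by simpa using hV)
      exact this)
  have h1W : ∀ W ∈ A.image (conjClass V), (1 : G) ∈ W := by
    intro W hW
    obtain ⟨a, -, rfl⟩ := Finset.mem_image.mp hW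
    exact ⟨1, h1V, 1, h1V, 1, h1V, by group⟩
  have hcov : ∀ x : G, ∃ W ∈ A.image (conjClass V),
      ∃ c ∈ (A ×ˢ B).image (fun p : G × G => p.1 * p.2), ∃ w ∈ W, x = w * c := by
    intro x
    obtain ⟨k₁, hk₁, u, hu, k₂, hk₂, hx⟩ := hKcov x
    obtain ⟨a, haA, ha⟩ : ∃ a ∈ A, a⁻¹ * k₁ ∈ V := by
      have := hAcov hk₁
      simpa using this
    obtain ⟨b, hbB, hb⟩ : ∃ b ∈ B, k₂ * b⁻¹ ∈ V := by
      have := hBcov hk₂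
      simpa using this
    refine ⟨conjClass V a, Finset.mem_image_of_mem _ haA, a * b,
      Finset.mem_image.mpr ⟨(a, b), Finset.mem_product.mpr ⟨haA, hbB⟩, rfl⟩,
      a * ((a⁻¹ * k₁) * u * (k₂ * b⁻¹)) * a⁻¹,
      ⟨_, ha, _, hu, _, hb, rfl⟩, ?_⟩
    rw [hx]; group
  obtain ⟨W, hW, E, hE⟩ := coreNeumann (A.image (conjClass V)).card
    (A.image (conjClass V)) (fun _ => (A ×ˢ B).image (fun p : G × G => p.1 * p.2))
    le_rfl h1W hcov
  obtain ⟨a, -, rfl⟩ := Finset.mem_image.mp hW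
  refine ⟨E.image (fun c => a⁻¹ * c * a), fun g => ?_⟩
  obtain ⟨c, hc, w₁, hw₁, w₂, hw₂, hgx⟩ := hE (a * g * a⁻¹)
  obtain ⟨p₁, hp₁, q₁, hq₁, r₁, hr₁, rfl⟩ := hw₁
  obtain ⟨p₂, hp₂, q₂, hq₂, r₂, hr₂, rfl⟩ := hw₂
  refine ⟨r₁⁻¹ * q₁⁻¹ * p₁⁻¹ * p₂ * q₂ * r₂, ?_, a⁻¹ * c * a,
    Finset.mem_image_of_mem _ hc, ?_⟩
  · exact hP6 _ (hVsymm _ hr₁) _ (hVsymm _ hq₁) _ (hVsymm _ hp₁) _ hp₂ _ hq₂ _ hr₂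
  · have hg' : g = a⁻¹ * (a * g * a⁻¹) * a := by group
    rw [hg', hgx]; group
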